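/- Let g ∈ H¹(a, b) with g(a) = 0, where a < b are real numbers. Then ∫_a^b |g(t)|² / (t−a)² dt ≤ 4 ∫_a^b |g'(t)|² dt. -/

import Mathlib

open MeasureTheory Set
open scoped ENNReal
noncomputable section

lemma lint_rpow (a t r : ℝ) (hat : a ≤ t) (hr : -1 < r) :
    ∫⁻ s in Ioo a t, ENNReal.ofReal ((s - a) ^ r)
      = ENNReal.ofReal ((t - a) ^ (r + 1) / (r + 1)) := by
  have hii : IntervalIntegrable (fun s => (s - a) ^ r) volume a t := by
    have := (intervalIntegral.intervalIntegrable_rpow' (a := 0) (b := t - a) hr).comp_sub_right a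
    simpa using this
  have hint : IntegrableOn (fun s => (s - a) ^ r) (Ioo a t) :=
    ((intervalIntegrable_iff_integrableOn_Ioc_of_le hat).1 hii).mono_set Ioo_subset_Ioc_self
  rw [← ofReal_integral_eq_lintegral_ofReal hint
    ((ae_restrict_iff' measurableSet_Ioo).2 (Filter.Eventually.of_forall
      fun s hs => Real.rpow_nonneg (by linarith [hs.1]) r))]
  congr 1
  rw [← integral_Ioc_eq_integral_Ioo, ← intervalIntegral.integral_of_le hat,
    intervalIntegral.integral_comp_sub_right (fun x => x ^ r) a, sub_self,
    integral_rpow (Or.inl hr), Real.zero_rpow (by linarith), sub_zero]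

lemma lint_rpow2 (a s b : ℝ) (has : a < s) (hsb : s ≤ b) :
    ∫⁻ t in Ioo s b, ENNReal.ofReal ((t - a) ^ (-(3:ℝ)/2))
      ≤ ENNReal.ofReal (2 * (s - a) ^ (-(1:ℝ)/2)) := by
  have hc : ContinuousOn (fun t : ℝ => (t - a) ^ (-(3:ℝ)/2)) (Icc s b) := by
    apply ContinuousOn.rpow_const
    · exact (continuous_id.sub continuous_const).continuousOn
    · intro t ht; left; have := ht.1; intro h; nlinarith [h, this]
  have hii : IntervalIntegrable (fun t => (t - a) ^ (-(3:ℝ)/2)) volume s b :=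
    (hc.mono (by rw [uIcc_of_le hsb])).intervalIntegrable
  have hint : IntegrableOn (fun t => (t - a) ^ (-(3:ℝ)/2)) (Ioo s b) :=
    ((intervalIntegrable_iff_integrableOn_Ioc_of_le hsb).1 hii).mono_set Ioo_subset_Ioc_self
  rw [← ofReal_integral_eq_lintegral_ofReal hint
    ((ae_restrict_iff' measurableSet_Ioo).2 (Filter.Eventually.of_forall
      fun t ht => Real.rpow_nonneg (by linarith [ht.1]) _))]
  apply ENNReal.ofReal_le_ofReal
  rw [← integral_Ioc_eq_integral_Ioo, ← intervalIntegral.integral_of_le hsb,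
    intervalIntegral.integral_comp_sub_right (fun x => x ^ (-(3:ℝ)/2)) a,
    integral_rpow (Or.inr ⟨by norm_num, by
      rw [Set.mem_uIcc]; push_neg
      constructor <;> intro h <;> linarith⟩)]
  have h1 : (-(3:ℝ)/2) + 1 = -(1/2 : ℝ) := by norm_num
  rw [h1]
  have hb : (0:ℝ) ≤ (b - a) ^ (-(1/2):ℝ) := Real.rpow_nonneg (by linarith) _
  have : ((b - a) ^ (-(1/2):ℝ) - (s - a) ^ (-(1/2):ℝ)) / (-(1/2)) =
      2 * ((s - a) ^ (-(1/2):ℝ) - (b - a) ^ (-(1/2):ℝ)) := by ring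
  rw [this]
  have : (-(1:ℝ)/2) = (-(1/2):ℝ) := by norm_num
  rw [this]
  nlinarith [hb]

/-- One-dimensional Hardy inequality on a bounded interval:
if `g ∈ H¹(a,b)` with `g(a) = 0`, then
`∫_a^b |g(t)|²/(t-a)² dt ≤ 4 ∫_a^b |g'(t)|² dt`. -/
theorem stmt2 (a b : ℝ) (hab : a < b) (g : ℝ → ℝ)
    (hg : ContinuousOn g (Icc a b))
    (hg' : ∀ t ∈ Ioo a b, DifferentiableAt ℝ g t)
    (h0 : g a = 0) :
    ∫⁻ t in Ioo a b, ENNReal.ofReal (g t ^ 2 / (t - a) ^ 2)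
      ≤ 4 * ∫⁻ t in Ioo a b, ENNReal.ofReal (deriv g t ^ 2) := by
  by_cases hfin : (∫⁻ t in Ioo a b, ENNReal.ofReal (deriv g t ^ 2)) = ⊤
  · rw [hfin, ENNReal.mul_top (by norm_num)]
    exact le_top
  have hmeas : Measurable (deriv g) := measurable_deriv g
  have hsq_int : IntegrableOn (fun s => deriv g s ^ 2) (Ioo a b) := by
    refine ⟨(hmeas.pow_const 2).aestronglyMeasurable, ?_⟩
    rw [hasFiniteIntegral_iff_ofReal (Filter.Eventually.of_forall fun s => sq_nonneg _)]
    exact Ne.lt_top hfin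
  have hL1 : IntegrableOn (deriv g) (Ioo a b) := by
    have hm2 : MemLp (deriv g) 2 (volume.restrict (Ioo a b)) :=
      (memLp_two_iff_integrable_sq hmeas.aestronglyMeasurable).2 hsq_int
    haveI : IsFiniteMeasure (volume.restrict (Ioo a b)) :=
      ⟨by rw [Measure.restrict_apply_univ]; exact measure_Ioo_lt_top⟩
    exact hm2.integrable one_le_two
  have key : ∀ t ∈ Ioo a b, g t = ∫ s in Ioo a t, deriv g s := by
    intro t ht
    have hsub : Ioc a t ⊆ Ioo a b := fun x hx => ⟨hx.1, lt_of_le_of_lt hx.2 ht.2⟩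
    have hint : IntervalIntegrable (deriv g) volume a t :=
      (intervalIntegrable_iff_integrableOn_Ioc_of_le ht.1.le).2 (hL1.mono_set hsub)
    have := intervalIntegral.integral_eq_sub_of_hasDeriv_right_of_le ht.1.le
      (hg.mono (Icc_subset_Icc le_rfl ht.2.le))
      (fun x hx => ((hg' x ⟨hx.1, hx.2.trans ht.2⟩).hasDerivAt.hasDerivWithinAt)) hint
    rw [h0, sub_zero] at this
    rw [← this, intervalIntegral.integral_of_le ht.1.le, integral_Ioc_eq_integral_Ioo]
  have ptbd : ∀ t ∈ Ioo a b, ENNReal.ofReal (g t ^ 2) ≤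
      ENNReal.ofReal (2 * (t - a) ^ ((1:ℝ)/2)) *
      ∫⁻ s in Ioo a t, ENNReal.ofReal ((s - a) ^ ((1:ℝ)/2) * deriv g s ^ 2) := by
    intro t ht
    have hsub : Ioo a t ⊆ Ioo a b := Ioo_subset_Ioo le_rfl ht.2.le
    have habs_int : IntegrableOn (fun s => |deriv g s|) (Ioo a t) := (hL1.mono_set hsub).abs
    -- step 1 : |g t| ≤ ∫ |deriv|
    have h1 : |g t| ≤ ∫ s in Ioo a t, |deriv g s| := by
      rw [key t ht]
      calc |∫ s in Ioo a t, deriv g s| ≤ ∫ s in Ioo a t, |deriv g s| := by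
            simpa [Real.norm_eq_abs] using
              norm_integral_le_integral_norm (μ := volume.restrict (Ioo a t)) (deriv g)
        _ = _ := rfl
    have h2 : ENNReal.ofReal |g t| ≤ ∫⁻ s in Ioo a t, ENNReal.ofReal |deriv g s| := by
      rw [← ofReal_integral_eq_lintegral_ofReal habs_int
        (Filter.Eventually.of_forall fun s => abs_nonneg _)]
      exact ENNReal.ofReal_le_ofReal h1
    -- Cauchy-Schwarz
    set f1 : ℝ → ℝ≥0∞ := fun s => ENNReal.ofReal ((s - a) ^ (-(1:ℝ)/4)) with hf1def
    set f2 : ℝ → ℝ≥0∞ := fun s => ENNReal.ofReal ((s - a) ^ ((1:ℝ)/4) * |deriv g s|) with hf2def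
    have hm1 : Measurable f1 :=
      ENNReal.measurable_ofReal.comp ((measurable_id.sub measurable_const).pow measurable_const)
    have hm2 : Measurable f2 :=
      ENNReal.measurable_ofReal.comp
        (((measurable_id.sub measurable_const).pow measurable_const).mul hmeas.abs)
    have hprod : ∀ᵐ s ∂(volume.restrict (Ioo a t)),
        ENNReal.ofReal |deriv g s| = (f1 * f2) s := by
      refine (ae_restrict_iff' measurableSet_Ioo).2 (Filter.Eventually.of_forall fun s hs => ?_)
      have hsa : (0:ℝ) < s - a := by linarith [hs.1]
      simp only [Pi.mul_apply, hf1def, hf2def]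
      rw [← ENNReal.ofReal_mul (Real.rpow_nonneg hsa.le _), ← mul_assoc,
        ← Real.rpow_add hsa]
      norm_num
    have hCS := ENNReal.lintegral_mul_le_Lp_mul_Lq (volume.restrict (Ioo a t))
      Real.HolderConjugate.two_two hm1.aemeasurable hm2.aemeasurable
    -- identify the two factors
    have e1 : ∫⁻ s in Ioo a t, f1 s ^ (2:ℝ) = ENNReal.ofReal (2 * (t - a) ^ ((1:ℝ)/2)) := by
      have : ∫⁻ s in Ioo a t, f1 s ^ (2:ℝ)
          = ∫⁻ s in Ioo a t, ENNReal.ofReal ((s - a) ^ (-(1:ℝ)/2)) := by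
        refine lintegral_congr_ae ((ae_restrict_iff' measurableSet_Ioo).2
          (Filter.Eventually.of_forall fun s hs => ?_))
        have hsa : (0:ℝ) ≤ s - a := by linarith [hs.1]
        simp only [hf1def]
        rw [ENNReal.ofReal_rpow_of_nonneg (Real.rpow_nonneg hsa _) (by norm_num : (0:ℝ) ≤ 2),
          ← Real.rpow_mul hsa]
        norm_num
      rw [this, lint_rpow a t _ ht.1.le (by norm_num),
        show (-(1:ℝ)/2 + 1) = 1/2 by norm_num,
        show ((t-a):ℝ)^((1:ℝ)/2) / (1/2) = 2 * (t-a)^((1:ℝ)/2) by ring]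
    have e2 : ∫⁻ s in Ioo a t, f2 s ^ (2:ℝ)
        = ∫⁻ s in Ioo a t, ENNReal.ofReal ((s - a) ^ ((1:ℝ)/2) * deriv g s ^ 2) := by
      refine lintegral_congr_ae ((ae_restrict_iff' measurableSet_Ioo).2
        (Filter.Eventually.of_forall fun s hs => ?_))
      have hsa : (0:ℝ) ≤ s - a := by linarith [hs.1]
      simp only [hf2def]
      have habs2 : |deriv g s| ^ (2:ℝ) = deriv g s ^ 2 := by
        rw [show ((2:ℝ)) = ((2:ℕ):ℝ) by norm_num, Real.rpow_natCast, sq_abs]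
      rw [ENNReal.ofReal_rpow_of_nonneg
          (mul_nonneg (Real.rpow_nonneg hsa _) (abs_nonneg _)) (by norm_num : (0:ℝ) ≤ 2),
        Real.mul_rpow (Real.rpow_nonneg hsa _) (abs_nonneg _), habs2, ← Real.rpow_mul hsa]
      norm_num
    -- put together
    have hsq : ENNReal.ofReal (g t ^ 2) = ENNReal.ofReal |g t| ^ 2 := by
      rw [← ENNReal.ofReal_pow (abs_nonneg _), sq_abs]
    rw [hsq]
    calc ENNReal.ofReal |g t| ^ 2
        ≤ (∫⁻ s in Ioo a t, ENNReal.ofReal |deriv g s|) ^ 2 := pow_le_pow_left' h2 2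
      _ = (∫⁻ s in Ioo a t, (f1 * f2) s) ^ 2 := by rw [lintegral_congr_ae hprod]
      _ ≤ ((∫⁻ s in Ioo a t, f1 s ^ (2:ℝ)) ^ (1/(2:ℝ))
            * (∫⁻ s in Ioo a t, f2 s ^ (2:ℝ)) ^ (1/(2:ℝ))) ^ 2 := pow_le_pow_left' hCS 2
      _ = (∫⁻ s in Ioo a t, f1 s ^ (2:ℝ)) * (∫⁻ s in Ioo a t, f2 s ^ (2:ℝ)) := by
          rw [mul_pow, ← ENNReal.rpow_natCast (_ ^ (1/(2:ℝ))) 2,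
            ← ENNReal.rpow_natCast ((∫⁻ s in Ioo a t, f2 s ^ (2:ℝ)) ^ (1/(2:ℝ))) 2,
            ← ENNReal.rpow_mul, ← ENNReal.rpow_mul]
          norm_num
      _ = _ := by rw [e1, e2]
  set c : ℝ → ℝ≥0∞ := fun t => ENNReal.ofReal (2 * (t - a) ^ (-(3:ℝ)/2)) with hcdef
  set h : ℝ → ℝ≥0∞ := fun s => ENNReal.ofReal ((s - a) ^ ((1:ℝ)/2) * deriv g s ^ 2) with hhdef
  have hmh : Measurable h :=
    ENNReal.measurable_ofReal.comp
      (((measurable_id.sub measurable_const).pow measurable_const).mul (hmeas.pow_const 2))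
  have hmc : Measurable c :=
    ENNReal.measurable_ofReal.comp
      (measurable_const.mul ((measurable_id.sub measurable_const).pow measurable_const))
  -- Step 1: pointwise domination
  have step1 : ∫⁻ t in Ioo a b, ENNReal.ofReal (g t ^ 2 / (t - a) ^ 2)
      ≤ ∫⁻ t in Ioo a b, c t * ∫⁻ s in Ioo a t, h s := by
    refine lintegral_mono_ae ((ae_restrict_iff' measurableSet_Ioo).2
      (Filter.Eventually.of_forall fun t ht => ?_))
    have hta : (0:ℝ) < t - a := by linarith [ht.1]
    have e1 : g t ^ 2 / (t - a) ^ 2 = (t - a) ^ (-(2:ℝ)) * g t ^ 2 := by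
      rw [Real.rpow_neg hta.le, show ((2:ℝ)) = ((2:ℕ):ℝ) by norm_num, Real.rpow_natCast]
      field_simp
    rw [e1, ENNReal.ofReal_mul (Real.rpow_nonneg hta.le _)]
    calc ENNReal.ofReal ((t - a) ^ (-(2:ℝ))) * ENNReal.ofReal (g t ^ 2)
        ≤ ENNReal.ofReal ((t - a) ^ (-(2:ℝ))) *
          (ENNReal.ofReal (2 * (t - a) ^ ((1:ℝ)/2)) * ∫⁻ s in Ioo a t, h s) :=
          mul_le_mul_right (ptbd t ht) _
      _ = c t * ∫⁻ s in Ioo a t, h s := by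
          rw [← mul_assoc, ← ENNReal.ofReal_mul (Real.rpow_nonneg hta.le _), hcdef]
          congr 2
          rw [← mul_assoc, mul_comm ((t-a) ^ (-(2:ℝ))) 2, mul_assoc, ← Real.rpow_add hta]
          norm_num
  -- Step 2: Tonelli
  set F : ℝ × ℝ → ℝ≥0∞ := fun p =>
    {q : ℝ × ℝ | q.2 < q.1}.indicator (fun q => c q.1 * h q.2) p with hFdef
  have hmF : Measurable F :=
    ((hmc.comp measurable_fst).mul (hmh.comp measurable_snd)).indicator
      (measurableSet_lt measurable_snd measurable_fst)
  have inner1 : ∀ t ∈ Ioo a b, ∫⁻ s in Ioo a b, F (t, s) = c t * ∫⁻ s in Ioo a t, h s := by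
    intro t ht
    have e : ∀ s, F (t, s) = (Iio t).indicator (fun s => c t * h s) s := by
      intro s
      by_cases hst : s < t <;> simp [hFdef, Set.indicator_apply, hst]
    simp_rw [e]
    rw [lintegral_indicator measurableSet_Iio, Measure.restrict_restrict measurableSet_Iio,
      show Iio t ∩ Ioo a b = Ioo a t from Set.ext fun x => by
        simp only [mem_inter_iff, mem_Iio, mem_Ioo]
        exact ⟨fun hx => ⟨hx.2.1, hx.1⟩, fun hx => ⟨hx.2, hx.1, hx.2.trans ht.2⟩⟩,
      lintegral_const_mul _ hmh]
  have inner2 : ∀ s ∈ Ioo a b, ∫⁻ t in Ioo a b, F (t, s) = (∫⁻ t in Ioo s b, c t) * h s := by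
    intro s hs
    have e : ∀ t, F (t, s) = (Ioi s).indicator (fun t => c t * h s) t := by
      intro t
      by_cases hst : s < t <;> simp [hFdef, Set.indicator_apply, hst]
    simp_rw [e]
    rw [lintegral_indicator measurableSet_Ioi, Measure.restrict_restrict measurableSet_Ioi,
      show Ioi s ∩ Ioo a b = Ioo s b from Set.ext fun x => by
        simp only [mem_inter_iff, mem_Ioi, mem_Ioo]
        exact ⟨fun hx => ⟨hx.1, hx.2.2⟩, fun hx => ⟨hx.1, hs.1.trans hx.1, hx.2⟩⟩,
      lintegral_mul_const _ hmc]
  have swap : ∫⁻ t in Ioo a b, ∫⁻ s in Ioo a b, F (t, s)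
      = ∫⁻ s in Ioo a b, ∫⁻ t in Ioo a b, F (t, s) :=
    lintegral_lintegral_swap (hmF.aemeasurable)
  -- Step 3: bound the inner t-integral
  have step3 : ∀ s ∈ Ioo a b, (∫⁻ t in Ioo s b, c t) * h s
      ≤ 4 * ENNReal.ofReal (deriv g s ^ 2) := by
    intro s hs
    have hsa : (0:ℝ) < s - a := by linarith [hs.1]
    have hct : ∫⁻ t in Ioo s b, c t ≤ ENNReal.ofReal (4 * (s - a) ^ (-(1:ℝ)/2)) := by
      have heq : ∀ t, c t = 2 * ENNReal.ofReal ((t - a) ^ (-(3:ℝ)/2)) := by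
        intro t
        show ENNReal.ofReal (2 * (t - a) ^ (-(3:ℝ)/2)) = _
        rw [ENNReal.ofReal_mul (by norm_num : (0:ℝ) ≤ 2)]
        norm_num
      have hm3 : Measurable fun t : ℝ => ENNReal.ofReal ((t - a) ^ (-(3:ℝ)/2)) :=
        ENNReal.measurable_ofReal.comp ((measurable_id.sub measurable_const).pow measurable_const)
      simp_rw [heq]
      rw [lintegral_const_mul 2 hm3]
      calc 2 * ∫⁻ t in Ioo s b, ENNReal.ofReal ((t - a) ^ (-(3:ℝ)/2))
          ≤ 2 * ENNReal.ofReal (2 * (s - a) ^ (-(1:ℝ)/2)) :=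
            mul_le_mul_right (lint_rpow2 a s b hs.1 hs.2.le) _
        _ = ENNReal.ofReal (4 * (s - a) ^ (-(1:ℝ)/2)) := by
            rw [ENNReal.ofReal_mul (by norm_num : (0:ℝ) ≤ 2),
              ENNReal.ofReal_mul (by norm_num : (0:ℝ) ≤ 4),
              ENNReal.ofReal_ofNat, ENNReal.ofReal_ofNat, ← mul_assoc]
            norm_num
    calc (∫⁻ t in Ioo s b, c t) * h s
        ≤ ENNReal.ofReal (4 * (s - a) ^ (-(1:ℝ)/2)) * h s := mul_le_mul_left hct _
      _ = 4 * ENNReal.ofReal (deriv g s ^ 2) := by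
          rw [hhdef, ← ENNReal.ofReal_mul (by positivity)]
          rw [show 4 * (s - a) ^ (-(1:ℝ)/2) * ((s - a) ^ ((1:ℝ)/2) * deriv g s ^ 2)
              = 4 * ((s - a) ^ (-(1:ℝ)/2) * (s - a) ^ ((1:ℝ)/2)) * deriv g s ^ 2 by ring,
            ← Real.rpow_add hsa]
          norm_num
  -- put everything together
  calc ∫⁻ t in Ioo a b, ENNReal.ofReal (g t ^ 2 / (t - a) ^ 2)
      ≤ ∫⁻ t in Ioo a b, c t * ∫⁻ s in Ioo a t, h s := step1
    _ = ∫⁻ t in Ioo a b, ∫⁻ s in Ioo a b, F (t, s) := by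
        refine lintegral_congr_ae ((ae_restrict_iff' measurableSet_Ioo).2
          (Filter.Eventually.of_forall fun t ht => ?_))
        exact (inner1 t ht).symm
    _ = ∫⁻ s in Ioo a b, ∫⁻ t in Ioo a b, F (t, s) := swap
    _ ≤ ∫⁻ s in Ioo a b, 4 * ENNReal.ofReal (deriv g s ^ 2) := by
        refine lintegral_mono_ae ((ae_restrict_iff' measurableSet_Ioo).2
          (Filter.Eventually.of_forall fun s hs => ?_))
        rw [inner2 s hs]
        exact step3 s hs
    _ = 4 * ∫⁻ t in Ioo a b, ENNReal.ofReal (deriv g t ^ 2) :=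
        lintegral_const_mul _ (ENNReal.measurable_ofReal.comp (hmeas.pow_const 2))
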